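/- Let K ⊆ ℝ² be a multicone and K' ⊆ ℝ² a multicone compactly contained in K. Then there exists c > 0 such that for every A ∈ SL(2,ℝ) with A(K) ⊆ K' and every nonzero w ∈ K', one has ‖Aw‖ ≥ c·‖A‖·‖w‖. -/

import Mathlib

open Matrix

abbrev SL2 := Matrix.SpecialLinearGroup (Fin 2) ℝ

/-- The operator norm of a 2x2 real matrix, acting on Euclidean `ℝ²`. -/
noncomputable def matNorm (A : Matrix (Fin 2) (Fin 2) ℝ) : ℝ :=
  ‖LinearMap.toContinuousLinearMap (Matrix.toEuclideanLin A)‖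

instance : TopologicalSpace SL2 :=
  TopologicalSpace.induced (fun A => (A : Matrix (Fin 2) (Fin 2) ℝ)) inferInstance

/-- Product of the word `l` under the letter assignment `A`. -/
def wordProd {ι : Type*} (A : ι → SL2) (l : List ι) : SL2 := (l.map A).prod

/-- The zeta function `ζ_𝒜(s) = ∑_{n≥1} ∑_{A ∈ 𝒜ⁿ} ‖A‖^{-2s}`, the sum ranging over all
nonempty words over the alphabet `ι` (valued in `ℝ≥0∞` so divergence is value `⊤`). -/
noncomputable def zeta {ι : Type*} (A : ι → SL2) (s : ℝ) : ENNReal :=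
  ∑' l : {l : List ι // l ≠ []}, ENNReal.ofReal (matNorm (wordProd A l.1) ^ (-2 * s))

/-- The critical exponent `δ_𝒜 = inf {s > 0 : ζ_𝒜(s) < ∞}` (equal to `⊤` if the zeta
function always diverges). -/
noncomputable def deltaOf {ι : Type*} (A : ι → SL2) : ENNReal :=
  ⨅ s : {s : ℝ // 0 < s ∧ zeta A s < ⊤}, ENNReal.ofReal s.1

abbrev V2 := EuclideanSpace ℝ (Fin 2)

/-- An open convex cone in `ℝ²`: `{x v₁ + y v₂ : x, y > 0}` for linearly independent
`v₁, v₂`. -/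
def IsCone (C : Set V2) : Prop :=
  ∃ v₁ v₂ : V2, LinearIndependent ℝ ![v₁, v₂] ∧
    C = {w | ∃ x y : ℝ, 0 < x ∧ 0 < y ∧ w = x • v₁ + y • v₂}

/-- A multicone in `ℝ²`: a finite union of cones with pairwise disjoint closures. -/
def IsMulticone (K : Set V2) : Prop :=
  ∃ (n : ℕ) (C : Fin n → Set V2), (∀ i, IsCone (C i)) ∧
    (Pairwise fun i j => Disjoint (closure (C i)) (closure (C j))) ∧
    K = ⋃ i, C i

/-- The linear action of `A ∈ SL(2,ℝ)` on Euclidean `ℝ²`. -/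
noncomputable def linAct (A : SL2) : V2 →ₗ[ℝ] V2 :=
  Matrix.toEuclideanLin (A : Matrix (Fin 2) (Fin 2) ℝ)


section Aux

set_option maxHeartbeats 1000000

open Real RealInnerProductSpace

lemma IsCone.exists_coord {C : Set V2} (h : IsCone C) :
    ∃ f g : V2 →ₗ[ℝ] ℝ, (∀ w, w ∈ C ↔ 0 < f w ∧ 0 < g w) ∧
      (∀ w, f w = 0 → g w = 0 → w = 0) := by
  obtain ⟨v₁, v₂, hli, rfl⟩ := h
  have hcard : Fintype.card (Fin 2) = Module.finrank ℝ V2 := by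
    simp [finrank_euclideanSpace]
  let b : Module.Basis (Fin 2) ℝ V2 := basisOfLinearIndependentOfCardEqFinrank hli hcard
  have hb : ⇑b = ![v₁, v₂] := coe_basisOfLinearIndependentOfCardEqFinrank hli hcard
  have hb0 : b 0 = v₁ := by rw [hb]; rfl
  have hb1 : b 1 = v₂ := by rw [hb]; rfl
  refine ⟨(Finsupp.lapply 0).comp b.repr.toLinearMap,
    (Finsupp.lapply 1).comp b.repr.toLinearMap, fun w => ⟨?_, ?_⟩, fun w h0 h1 => ?_⟩
  · rintro ⟨x, y, hx, hy, rfl⟩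
    simp only [LinearMap.comp_apply, Finsupp.lapply_apply, LinearEquiv.coe_toLinearMap,
      map_add, _root_.map_smul, ← hb0, ← hb1, Module.Basis.repr_self, Finsupp.coe_add, Finsupp.coe_smul,
      Pi.add_apply, Pi.smul_apply, Finsupp.single_apply]
    norm_num [hx, hy]
  · rintro ⟨h0, h1⟩
    refine ⟨_, _, h0, h1, ?_⟩
    conv_lhs => rw [← b.sum_repr w]
    rw [Fin.sum_univ_two, hb0, hb1]; rfl
  · have := b.sum_repr w
    rw [Fin.sum_univ_two] at this
    simp only [LinearMap.comp_apply, Finsupp.lapply_apply, LinearEquiv.coe_toLinearMap] at h0 h1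
    rw [← this, h0, h1, zero_smul, zero_smul, add_zero]

lemma IsCone.isOpen {C : Set V2} (h : IsCone C) : IsOpen C := by
  obtain ⟨f, g, hmem, -⟩ := h.exists_coord
  have : C = f ⁻¹' Set.Ioi 0 ∩ g ⁻¹' Set.Ioi 0 := by
    ext w; simpa using hmem w
  rw [this]
  exact ((isOpen_Ioi.preimage f.continuous_of_finiteDimensional).inter
    (isOpen_Ioi.preimage g.continuous_of_finiteDimensional))

lemma IsCone.smul_mem {C : Set V2} (h : IsCone C) {r : ℝ} (hr : 0 < r) {w : V2}
    (hw : w ∈ C) : r • w ∈ C := by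
  obtain ⟨f, g, hmem, -⟩ := h.exists_coord
  rw [hmem] at hw ⊢
  simp only [_root_.map_smul, smul_eq_mul]
  exact ⟨mul_pos hr hw.1, mul_pos hr hw.2⟩

lemma IsCone.zero_not_mem {C : Set V2} (h : IsCone C) : (0:V2) ∉ C := by
  obtain ⟨f, g, hmem, -⟩ := h.exists_coord
  rw [hmem]; simp

lemma IsCone.pointed {C : Set V2} (h : IsCone C) {x y : V2} (hx : x ∈ closure C)
    (hy : y ∈ closure C) (hxy : x + y = 0) : x = 0 := by
  obtain ⟨f, g, hmem, hpt⟩ := h.exists_coord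
  have hcl : ∀ w ∈ closure C, 0 ≤ f w ∧ 0 ≤ g w := by
    intro w hw
    have hsub : closure C ⊆ f ⁻¹' Set.Ici 0 ∩ g ⁻¹' Set.Ici 0 := by
      apply closure_minimal
      · intro u hu
        have := (hmem u).1 hu
        exact ⟨le_of_lt this.1, le_of_lt this.2⟩
      · exact ((isClosed_Ici.preimage f.continuous_of_finiteDimensional).inter
          (isClosed_Ici.preimage g.continuous_of_finiteDimensional))
    exact hsub hw
  obtain ⟨hfx, hgx⟩ := hcl x hx
  obtain ⟨hfy, hgy⟩ := hcl y hy
  have hfs : f x + f y = 0 := by rw [← map_add, hxy, map_zero]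
  have hgs : g x + g y = 0 := by rw [← map_add, hxy, map_zero]
  exact hpt x (by linarith) (by linarith)

lemma IsCone.exists_mu {C : Set V2} (h : IsCone C) :
    ∃ μ : ℝ, 0 < μ ∧ ∀ x ∈ C, ∀ y ∈ C, μ * (‖x‖ + ‖y‖) ≤ ‖x + y‖ := by
  by_cases hCe : C = ∅
  · exact ⟨1, one_pos, by simp [hCe]⟩
  have hS : (Metric.sphere (0:V2) 1 ∩ closure C).Nonempty := by
    obtain ⟨x, hx⟩ := Set.nonempty_iff_ne_empty.2 hCe
    have hx0 : x ≠ 0 := fun h0 => h.zero_not_mem (h0 ▸ hx)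
    have hn : (0:ℝ) < ‖x‖ := norm_pos_iff.2 hx0
    refine ⟨‖x‖⁻¹ • x, ?_, subset_closure (h.smul_mem (inv_pos.2 hn) hx)⟩
    simp [norm_smul, abs_of_pos (inv_pos.2 hn), inv_mul_cancel₀ hn.ne']
  have hcomp : IsCompact (Metric.sphere (0:V2) 1 ∩ closure C) :=
    (isCompact_sphere 0 1).inter_right isClosed_closure
  set S := Metric.sphere (0:V2) 1 ∩ closure C with hSdef
  have hcomp2 : IsCompact (S ×ˢ S) := hcomp.prod hcomp
  have hcont : ContinuousOn (fun p : V2 × V2 => ‖p.1 + p.2‖) (S ×ˢ S) :=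
    (continuous_fst.add continuous_snd).norm.continuousOn
  obtain ⟨⟨x₀, y₀⟩, hp₀, hmin⟩ := hcomp2.exists_isMinOn (hS.prod hS) hcont
  set m := ‖x₀ + y₀‖ with hm
  have hx₀ : x₀ ∈ S := hp₀.1
  have hy₀ : y₀ ∈ S := hp₀.2
  have hm0 : 0 < m := by
    rcases (norm_nonneg (x₀ + y₀)).lt_or_eq with h' | h'
    · exact h'
    · exfalso
      have : x₀ + y₀ = 0 := by
        have := h'.symm; rwa [norm_eq_zero] at this
      have hx0 := h.pointed hx₀.2 hy₀.2 this
      have : ‖x₀‖ = 1 := by simpa using hx₀.1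
      rw [hx0] at this; simp at this
  have hm2 : m ≤ 2 := by
    have h1 : ‖x₀‖ = 1 := by simpa using hx₀.1
    have h2 : ‖y₀‖ = 1 := by simpa using hy₀.1
    calc m ≤ ‖x₀‖ + ‖y₀‖ := norm_add_le _ _
    _ = 2 := by rw [h1, h2]; norm_num
  have hinner : ∀ x ∈ S, ∀ y ∈ S, (m^2 - 2)/2 ≤ inner ℝ x y := by
    intro x hx y hy
    have hle : m ≤ ‖x + y‖ := isMinOn_iff.mp hmin (x, y) (Set.mk_mem_prod hx hy)
    have hx1 : ‖x‖ = 1 := by simpa using hx.1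
    have hy1 : ‖y‖ = 1 := by simpa using hy.1
    have hsq : ‖x + y‖^2 = 1 + 2 * inner ℝ x y + 1 := by
      rw [norm_add_sq_real, hx1, hy1]; ring
    nlinarith [norm_nonneg (x + y)]
  refine ⟨m/2, by positivity, fun x hx y hy => ?_⟩
  have hx0 : x ≠ 0 := fun h0 => h.zero_not_mem (h0 ▸ hx)
  have hy0 : y ≠ 0 := fun h0 => h.zero_not_mem (h0 ▸ hy)
  set a := ‖x‖ with ha
  set b := ‖y‖ with hb2
  have ha0 : 0 < a := norm_pos_iff.2 hx0
  have hb0 : 0 < b := norm_pos_iff.2 hy0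
  have hxS : a⁻¹ • x ∈ S := by
    refine ⟨?_, subset_closure (h.smul_mem (inv_pos.2 ha0) hx)⟩
    simp only [mem_sphere_iff_norm, sub_zero, norm_smul, norm_inv, Real.norm_eq_abs,
      abs_of_pos ha0]
    exact inv_mul_cancel₀ ha0.ne'
  have hyS : b⁻¹ • y ∈ S := by
    refine ⟨?_, subset_closure (h.smul_mem (inv_pos.2 hb0) hy)⟩
    simp only [mem_sphere_iff_norm, sub_zero, norm_smul, norm_inv, Real.norm_eq_abs,
      abs_of_pos hb0]
    exact inv_mul_cancel₀ hb0.ne'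
  have hin : (m^2 - 2)/2 ≤ inner ℝ (a⁻¹ • x) (b⁻¹ • y) := hinner _ hxS _ hyS
  have hin2 : (inner ℝ (a⁻¹ • x) (b⁻¹ • y) : ℝ) = a⁻¹ * b⁻¹ * inner ℝ x y := by
    rw [real_inner_smul_left, real_inner_smul_right]; ring
  have hin3 : (m^2-2)/2 * (a*b) ≤ inner ℝ x y := by
    rw [hin2] at hin
    have := mul_le_mul_of_nonneg_right hin (le_of_lt (mul_pos ha0 hb0))
    calc (m^2-2)/2 * (a*b) ≤ a⁻¹ * b⁻¹ * inner ℝ x y * (a * b) := this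
    _ = inner ℝ x y := by field_simp
  have hsq : ‖x + y‖^2 = a^2 + 2 * inner ℝ x y + b^2 := by
    rw [norm_add_sq_real]
  have key : (m/2*(a+b))^2 ≤ ‖x + y‖^2 := by
    nlinarith [hin3, hsq, sq_nonneg (a - b), hm2, hm0.le,
      mul_nonneg (mul_nonneg (sub_nonneg.2 hm2) (by linarith : (0:ℝ) ≤ 2 + m))
        (sq_nonneg (a - b))]
  have := Real.sqrt_le_sqrt key
  rwa [Real.sqrt_sq (by positivity), Real.sqrt_sq (norm_nonneg _)] at this

noncomputable def perp (z : V2) : V2 := WithLp.toLp 2 ![-z 1, z 0]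

noncomputable def rot (t : ℝ) (z : V2) : V2 := Real.cos t • z + Real.sin t • perp z

lemma perp_apply0 (z : V2) : perp z 0 = -z 1 := rfl
lemma perp_apply1 (z : V2) : perp z 1 = z 0 := rfl

lemma norm_sq_v2 (z : V2) : ‖z‖^2 = z 0 * z 0 + z 1 * z 1 := by
  rw [← real_inner_self_eq_norm_sq]
  rw [PiLp.inner_apply]
  simp [Fin.sum_univ_two]; ring

lemma norm_perp (z : V2) : ‖perp z‖ = ‖z‖ := by
  have h1 : ‖perp z‖^2 = ‖z‖^2 := by
    rw [norm_sq_v2, norm_sq_v2, perp_apply0, perp_apply1]; ring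
  have := Real.sqrt_le_sqrt h1.le
  have h2 := Real.sqrt_le_sqrt h1.ge
  rw [Real.sqrt_sq (norm_nonneg _), Real.sqrt_sq (norm_nonneg _)] at this h2
  linarith

lemma decomp {z : V2} (hz : ‖z‖ = 1) (u : V2) :
    u = ⟪u, z⟫ • z + ⟪u, perp z⟫ • perp z := by
  have hz2 : z 0 * z 0 + z 1 * z 1 = 1 := by
    rw [← norm_sq_v2, hz]; norm_num
  have hiu : ⟪u, z⟫ = u 0 * z 0 + u 1 * z 1 := by
    rw [PiLp.inner_apply]; simp [Fin.sum_univ_two]; ring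
  have hip : ⟪u, perp z⟫ = u 0 * (-z 1) + u 1 * z 0 := by
    rw [PiLp.inner_apply]; simp [Fin.sum_univ_two, perp_apply0, perp_apply1]; ring
  ext i
  fin_cases i
  · show u 0 = (⟪u, z⟫ • z + ⟪u, perp z⟫ • perp z) 0
    rw [PiLp.add_apply, PiLp.smul_apply, PiLp.smul_apply, perp_apply0, hiu, hip,
      smul_eq_mul, smul_eq_mul]
    linear_combination (-(u 0)) * hz2
  · show u 1 = (⟪u, z⟫ • z + ⟪u, perp z⟫ • perp z) 1
    rw [PiLp.add_apply, PiLp.smul_apply, PiLp.smul_apply, perp_apply1, hiu, hip,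
      smul_eq_mul, smul_eq_mul]
    linear_combination (-(u 1)) * hz2

lemma rot_zero (z : V2) : rot 0 z = z := by simp [rot]

lemma rot_add_rot_neg (t : ℝ) (z : V2) : rot t z + rot (-t) z = (2 * Real.cos t) • z := by
  simp only [rot, Real.cos_neg, Real.sin_neg]
  module

lemma rot_sub_rot_neg (t : ℝ) (z : V2) :
    rot t z - rot (-t) z = (2 * Real.sin t) • perp z := by
  simp only [rot, Real.cos_neg, Real.sin_neg]
  module

lemma norm_rot_sub_self {z : V2} (hz : ‖z‖ = 1) (t : ℝ) :
    ‖rot t z - z‖ ≤ t^2/2 + |t| := by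
  have : rot t z - z = (Real.cos t - 1) • z + Real.sin t • perp z := by
    simp only [rot]; module
  rw [this]
  calc ‖(Real.cos t - 1) • z + Real.sin t • perp z‖
      ≤ ‖(Real.cos t - 1) • z‖ + ‖Real.sin t • perp z‖ := norm_add_le _ _
    _ = |Real.cos t - 1| * 1 + |Real.sin t| * 1 := by
        rw [norm_smul, norm_smul, norm_perp, hz]; simp
    _ ≤ t^2/2 + |t| := by
        have h1 : 1 - t^2/2 ≤ Real.cos t := by
          have := Real.one_sub_sq_div_two_le_cos (x := t); linarith
        have h2 : Real.cos t ≤ 1 := Real.cos_le_one t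
        have h3 : |Real.sin t| ≤ |t| := Real.abs_sin_le_abs
        rw [abs_of_nonpos (by linarith), mul_one, mul_one]
        linarith

lemma matNorm_le_of (A : Matrix (Fin 2) (Fin 2) ℝ) {z : V2} (hz : ‖z‖ = 1) :
    matNorm A ≤ ‖Matrix.toEuclideanLin A z‖ + ‖Matrix.toEuclideanLin A (perp z)‖ := by
  apply ContinuousLinearMap.opNorm_le_bound _ (by positivity)
  intro u
  set L := Matrix.toEuclideanLin A with hL
  have h1 : LinearMap.toContinuousLinearMap L u = L u := rfl
  rw [h1]
  conv_lhs => rw [decomp hz u]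
  rw [map_add, _root_.map_smul, _root_.map_smul]
  calc ‖⟪u, z⟫ • L z + ⟪u, perp z⟫ • L (perp z)‖
      ≤ ‖⟪u, z⟫ • L z‖ + ‖⟪u, perp z⟫ • L (perp z)‖ := norm_add_le _ _
    _ = |⟪u, z⟫| * ‖L z‖ + |⟪u, perp z⟫| * ‖L (perp z)‖ := by
        rw [norm_smul, norm_smul]; rfl
    _ ≤ ‖u‖ * ‖L z‖ + ‖u‖ * ‖L (perp z)‖ := by
        have e1 : |⟪u, z⟫| ≤ ‖u‖ := by
          have := abs_real_inner_le_norm u z; rwa [hz, mul_one] at this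
        have e2 : |⟪u, perp z⟫| ≤ ‖u‖ := by
          have := abs_real_inner_le_norm u (perp z)
          rwa [norm_perp, hz, mul_one] at this
        gcongr
    _ = (‖L z‖ + ‖L (perp z)‖) * ‖u‖ := by ring

lemma IsMulticone.isOpen {K : Set V2} (h : IsMulticone K) : IsOpen K := by
  obtain ⟨n, C, hC, -, rfl⟩ := h
  exact isOpen_iUnion fun i => (hC i).isOpen

lemma connected_in_component {n : ℕ} {C : Fin n → Set V2}
    (hC : ∀ i, IsCone (C i))
    (hdisj : Pairwise fun i j => Disjoint (closure (C i)) (closure (C j)))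
    {S : Set V2} (hconn : IsPreconnected S) (hsub : S ⊆ ⋃ i, C i) {p : V2} {i₀ : Fin n}
    (hp : p ∈ S) (hpi : p ∈ C i₀) : S ⊆ C i₀ := by
  by_contra hcon
  obtain ⟨q, hqS, hqn⟩ := Set.not_subset.mp hcon
  have hq2 : q ∈ ⋃ j ∈ ({i₀}ᶜ : Set (Fin n)), C j := by
    obtain ⟨j, hj⟩ := Set.mem_iUnion.mp (hsub hqS)
    have hne : j ∈ ({i₀}ᶜ : Set (Fin n)) := fun h => hqn (by rwa [Set.mem_singleton_iff.mp h] at hj)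
    exact Set.mem_biUnion hne hj
  have hopen2 : IsOpen (⋃ j ∈ ({i₀}ᶜ : Set (Fin n)), C j) :=
    isOpen_biUnion fun j _ => (hC j).isOpen
  have hcover : S ⊆ C i₀ ∪ ⋃ j ∈ ({i₀}ᶜ : Set (Fin n)), C j := by
    intro x hx
    obtain ⟨j, hj⟩ := Set.mem_iUnion.mp (hsub hx)
    by_cases hji : j = i₀
    · exact Or.inl (hji ▸ hj)
    · exact Or.inr (Set.mem_biUnion hji hj)
  obtain ⟨x, -, hx1, hx2⟩ :=
    hconn (C i₀) _ (hC i₀).isOpen hopen2 hcover ⟨p, hp, hpi⟩ ⟨q, hqS, hq2⟩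
  rw [Set.mem_iUnion₂] at hx2
  obtain ⟨j, hjne, hj⟩ := hx2
  exact Set.disjoint_left.mp (hdisj (fun h => hjne (by rw [h]; rfl)))
    (subset_closure hj) (subset_closure hx1)

end Aux

/-- If `K` is a multicone and `K'` a multicone compactly contained in `K`, then there is
`c > 0` such that for every `A ∈ SL(2,ℝ)` with `A(K) ⊆ K'` and every nonzero `w ∈ K'`,
`‖Aw‖ ≥ c‖A‖‖w‖`. -/
theorem stmt6 (K K' : Set V2) (hK : IsMulticone K) (hK' : IsMulticone K')
    (hcc : closure K' \ {0} ⊆ K) :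
    ∃ c : ℝ, 0 < c ∧ ∀ A : SL2, Set.MapsTo (linAct A) K K' →
      ∀ w ∈ K', w ≠ 0 →
        ‖linAct A w‖ ≥ c * matNorm (A : Matrix (Fin 2) (Fin 2) ℝ) * ‖w‖ := by
  classical
  by_cases hKe : K' = ∅
  · exact ⟨1, one_pos, fun A _ w hw _ => absurd hw (by simp [hKe])⟩
  obtain ⟨n, C, hC, hdisj, hKeq⟩ := hK'
  obtain ⟨w₀, hw₀⟩ := Set.nonempty_iff_ne_empty.2 hKe
  have hn : Nonempty (Fin n) := by
    rw [hKeq] at hw₀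
    obtain ⟨i, -⟩ := Set.mem_iUnion.mp hw₀
    exact ⟨i⟩
  choose μ hμpos hμ using fun i => (hC i).exists_mu
  set μ₀ : ℝ := Finset.univ.inf' Finset.univ_nonempty μ with hμ₀def
  have hμ₀pos : 0 < μ₀ := by
    rw [hμ₀def, Finset.lt_inf'_iff]
    exact fun i _ => hμpos i
  have hμ₀le : ∀ i, μ₀ ≤ μ i := fun i => Finset.inf'_le _ (Finset.mem_univ i)
  -- thickening of the compact set of unit vectors of closure K' inside open K
  have hDcomp : IsCompact (Metric.sphere (0:V2) 1 ∩ closure K') :=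
    (isCompact_sphere 0 1).inter_right isClosed_closure
  have hDK : Metric.sphere (0:V2) 1 ∩ closure K' ⊆ K := by
    intro z hz
    have hz0 : z ≠ 0 := by
      intro h0
      rw [h0] at hz
      simpa using hz.1
    exact hcc ⟨hz.2, hz0⟩
  obtain ⟨r, hr, hthick⟩ := hDcomp.exists_thickening_subset_open hK.isOpen hDK
  set ε : ℝ := min (r/2) 1 with hεdef
  have hε : 0 < ε := lt_min (by linarith) one_pos
  have hε1 : ε ≤ 1 := min_le_right _ _
  have hεr : ε ≤ r/2 := min_le_left _ _
  have hπ : (1:ℝ) < Real.pi / 2 := by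
    have := Real.pi_gt_three
    linarith
  have hsin : 0 < Real.sin ε :=
    Real.sin_pos_of_pos_of_lt_pi hε (by nlinarith [Real.pi_gt_three])
  have hcos : 0 < Real.cos ε :=
    Real.cos_pos_of_mem_Ioo ⟨by nlinarith [Real.pi_gt_three], by linarith⟩
  refine ⟨μ₀ * Real.sin ε / (μ₀ * Real.sin ε + Real.cos ε), by positivity, ?_⟩
  intro A hA w hw hw0
  set c : ℝ := μ₀ * Real.sin ε / (μ₀ * Real.sin ε + Real.cos ε) with hcdef
  have hc0 : 0 < c := by positivity
  have hnw : 0 < ‖w‖ := norm_pos_iff.2 hw0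
  set z := ‖w‖⁻¹ • w with hzdef
  have hz1 : ‖z‖ = 1 := by
    rw [hzdef, norm_smul, norm_inv, norm_norm]
    exact inv_mul_cancel₀ hnw.ne'
  have hzK' : z ∈ K' := by
    rw [hKeq] at hw ⊢
    obtain ⟨i, hi⟩ := Set.mem_iUnion.mp hw
    exact Set.mem_iUnion.mpr ⟨i, (hC i).smul_mem (inv_pos.2 hnw) hi⟩
  have hrotK : ∀ t : ℝ, |t| ≤ ε → rot t z ∈ K := by
    intro t ht
    apply hthick
    rw [Metric.mem_thickening_iff]
    refine ⟨z, ⟨by simp [hz1], subset_closure hzK'⟩, ?_⟩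
    rw [dist_eq_norm]
    have h1 := norm_rot_sub_self hz1 t
    have h2 : t^2 ≤ ε := by
      have : |t|^2 ≤ ε^2 := by nlinarith [abs_nonneg t]
      rw [sq_abs] at this
      nlinarith
    calc ‖rot t z - z‖ ≤ t^2/2 + |t| := h1
    _ ≤ ε/2 + ε := by linarith
    _ < r := by linarith
  set f : ℝ → V2 := fun t => linAct A (rot t z) with hfdef
  have hfc : Continuous f := by
    have hrc : Continuous (fun t : ℝ => rot t z) := by
      unfold rot
      exact (Real.continuous_cos.smul continuous_const).add
        (Real.continuous_sin.smul continuous_const)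
    exact (linAct A).continuous_of_finiteDimensional.comp hrc
  set S := f '' Set.Icc (-ε) ε with hSdef
  have hSconn : IsPreconnected S := isPreconnected_Icc.image f hfc.continuousOn
  have hSsub : S ⊆ ⋃ i, C i := by
    rintro - ⟨t, ht, rfl⟩
    rw [← hKeq]
    exact hA (hrotK t (abs_le.2 ⟨ht.1, ht.2⟩))
  have hf0 : f 0 ∈ S := ⟨0, ⟨by linarith, by linarith⟩, rfl⟩
  obtain ⟨i₀, hi₀⟩ := Set.mem_iUnion.mp (hSsub hf0)
  have hSC : S ⊆ C i₀ := connected_in_component hC hdisj hSconn hSsub hf0 hi₀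
  have hx : f ε ∈ C i₀ := hSC ⟨ε, ⟨by linarith, le_refl _⟩, rfl⟩
  have hy : f (-ε) ∈ C i₀ := hSC ⟨-ε, ⟨le_refl _, by linarith⟩, rfl⟩
  have hxy : f ε + f (-ε) = (2 * Real.cos ε) • linAct A z := by
    rw [hfdef]
    simp only
    rw [← map_add, rot_add_rot_neg, _root_.map_smul]
  have hxy2 : f ε - f (-ε) = (2 * Real.sin ε) • linAct A (perp z) := by
    rw [hfdef]
    simp only
    rw [← map_sub, rot_sub_rot_neg, _root_.map_smul]
  have h1 : μ₀ * (‖f ε‖ + ‖f (-ε)‖) ≤ 2 * Real.cos ε * ‖linAct A z‖ := by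
    calc μ₀ * (‖f ε‖ + ‖f (-ε)‖) ≤ μ i₀ * (‖f ε‖ + ‖f (-ε)‖) :=
          mul_le_mul_of_nonneg_right (hμ₀le i₀) (by positivity)
    _ ≤ ‖f ε + f (-ε)‖ := hμ i₀ _ hx _ hy
    _ = |2 * Real.cos ε| * ‖linAct A z‖ := by rw [hxy, norm_smul, Real.norm_eq_abs]
    _ = 2 * Real.cos ε * ‖linAct A z‖ := by rw [abs_of_pos (by linarith)]
  have h2 : ‖linAct A (perp z)‖ * (μ₀ * Real.sin ε) ≤ Real.cos ε * ‖linAct A z‖ := by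
    have e1 : 2 * Real.sin ε * ‖linAct A (perp z)‖ = ‖f ε - f (-ε)‖ := by
      rw [hxy2, norm_smul, Real.norm_eq_abs, abs_of_pos (by linarith)]
    have e2 : ‖f ε - f (-ε)‖ ≤ ‖f ε‖ + ‖f (-ε)‖ := norm_sub_le _ _
    have e3 : μ₀ * (2 * Real.sin ε * ‖linAct A (perp z)‖) ≤
        μ₀ * (‖f ε‖ + ‖f (-ε)‖) := by
      apply mul_le_mul_of_nonneg_left _ hμ₀pos.le
      rw [e1]; exact e2
    nlinarith [e3, h1]
  have h3 : matNorm (A : Matrix (Fin 2) (Fin 2) ℝ) ≤ ‖linAct A z‖ + ‖linAct A (perp z)‖ :=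
    matNorm_le_of (A : Matrix (Fin 2) (Fin 2) ℝ) hz1
  have h4 : ‖linAct A z‖ = ‖w‖⁻¹ * ‖linAct A w‖ := by
    rw [hzdef, _root_.map_smul, norm_smul, norm_inv, norm_norm]
  have h5 : c * matNorm (A : Matrix (Fin 2) (Fin 2) ℝ) ≤ ‖linAct A z‖ := by
    have hq : matNorm (A : Matrix (Fin 2) (Fin 2) ℝ) ≤
        (1 + Real.cos ε / (μ₀ * Real.sin ε)) * ‖linAct A z‖ := by
      have hms : 0 < μ₀ * Real.sin ε := by positivity
      have := h2
      rw [← le_div_iff₀ hms] at this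
      calc matNorm (A : Matrix (Fin 2) (Fin 2) ℝ) ≤ ‖linAct A z‖ + ‖linAct A (perp z)‖ := h3
      _ ≤ ‖linAct A z‖ + Real.cos ε * ‖linAct A z‖ / (μ₀ * Real.sin ε) := by linarith
      _ = (1 + Real.cos ε / (μ₀ * Real.sin ε)) * ‖linAct A z‖ := by ring
    have hcsum : c * (1 + Real.cos ε / (μ₀ * Real.sin ε)) = 1 := by
      rw [hcdef]
      field_simp
    calc c * matNorm (A : Matrix (Fin 2) (Fin 2) ℝ)
        ≤ c * ((1 + Real.cos ε / (μ₀ * Real.sin ε)) * ‖linAct A z‖) :=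
          mul_le_mul_of_nonneg_left hq hc0.le
    _ = (c * (1 + Real.cos ε / (μ₀ * Real.sin ε))) * ‖linAct A z‖ := by ring
    _ = ‖linAct A z‖ := by rw [hcsum, one_mul]
  rw [ge_iff_le]
  have h6 : ‖linAct A w‖ = ‖w‖ * ‖linAct A z‖ := by
    rw [h4]
    field_simp
  calc c * matNorm (A : Matrix (Fin 2) (Fin 2) ℝ) * ‖w‖
      ≤ ‖linAct A z‖ * ‖w‖ := mul_le_mul_of_nonneg_right h5 hnw.le
  _ = ‖linAct A w‖ := by rw [h6]; ring
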